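/- Let α_A = α_H = 0 and β_A, β_H > 0 with β_A ≠ β_H (class P_NI), let λ ∈ (0,1) and ω₀ ≥ 1, and set q_λ^E := β_A^λ·β_H^{1−λ} (so 0 < q_λ^E < β_λ). Then: (a) H_{λ,1} = exp( (β_A^λ·β_H^{1−λ} − λβ_A − (1−λ)β_H)·ω₀ ) < 1; (b) H_{λ,n} = exp( a_n^{(q_λ^E)}·ω₀ ) for all n ≥ 1, and this sequence is strictly decreasing in n; (c) lim_{n→∞} H_{λ,n} = exp( x₀^{(q_λ^E)}·ω₀ ) ∈ (0,1); (d) lim_{n→∞} (1/n)·log H_{λ,n} = 0. -/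

import Mathlib

open Real Filter

/-- One transition weight of the Poisson Galton–Watson process with immigration:
probability that the next generation size is `y` given the previous size is `x`. -/
noncomputable def gwStep (β α : ℝ) (x y : ℕ) : ℝ :=
  Real.exp (-(β * (x : ℝ) + α)) * (β * (x : ℝ) + α) ^ y / (Nat.factorial y : ℝ)

/-- The `n`-step path law (pmf on `Fin n → ℕ`) with initial generation size `ω₀`. -/
noncomputable def gwPath (β α : ℝ) (ω₀ n : ℕ) (ω : Fin n → ℕ) : ℝ :=
  ∏ k : Fin n,
    gwStep β α
      (if (k : ℕ) = 0 then ω₀ else ω ⟨(k : ℕ) - 1, Nat.lt_of_le_of_lt (Nat.sub_le _ _) k.2⟩)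
      (ω k)

/-- Hellinger integral of order `lam` between the `n`-step path laws. -/
noncomputable def hellinger (βA αA βH αH lam : ℝ) (ω₀ n : ℕ) : ℝ :=
  ∑' ω : Fin n → ℕ, gwPath βA αA ω₀ n ω ^ lam * gwPath βH αH ω₀ n ω ^ (1 - lam)

/-- The recursion `a₀ = 0`, `a_{n+1} = q·e^{a_n} − βl`. -/
noncomputable def aSeq (q βl : ℝ) : ℕ → ℝ
  | 0 => 0
  | n + 1 => q * Real.exp (aSeq q βl n) - βl

/-- The recursion `b₀ = 0`, `b_{n+1} = p·e^{a_n} − αl`. -/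
noncomputable def bSeq (p q βl αl : ℝ) : ℕ → ℝ
  | 0 => 0
  | n + 1 => p * Real.exp (aSeq q βl n) - αl

lemma gwStep_nonneg {β : ℝ} (hβ : 0 ≤ β) (x y : ℕ) : 0 ≤ gwStep β 0 x y := by
  unfold gwStep
  positivity

lemma gwPath_nonneg {β : ℝ} (hβ : 0 ≤ β) (w n : ℕ) (ω : Fin n → ℕ) :
    0 ≤ gwPath β 0 w n ω :=
  Finset.prod_nonneg fun k _ => gwStep_nonneg hβ _ _

lemma gwPath_cons (β α : ℝ) (w y n : ℕ) (ω : Fin n → ℕ) :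
    gwPath β α w (n+1) (Fin.cons y ω) = gwStep β α w y * gwPath β α y n ω := by
  unfold gwPath
  rw [Fin.prod_univ_succ]
  congr 1
  · apply Finset.prod_congr rfl
    intro i _
    rcases i with ⟨iv, hi⟩
    cases iv with
    | zero =>
      have h2 : Fin.cons (α := fun _ => ℕ) y ω ⟨1, Nat.succ_lt_succ hi⟩ = ω ⟨0, hi⟩ := by
        rw [show (⟨1, Nat.succ_lt_succ hi⟩ : Fin (n+1)) = Fin.succ ⟨0, hi⟩ from rfl, Fin.cons_succ]
      simp [h2]
    | succ j => simp [Fin.cons, Fin.cases_succ']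

lemma rpow_gwStep {β : ℝ} (hβ : 0 < β) (x y : ℕ) (t : ℝ) :
    gwStep β 0 x y ^ t
      = Real.exp (-(β * (x : ℝ)) * t) * (β ^ t * (x : ℝ) ^ t) ^ y
        / (Nat.factorial y : ℝ) ^ t := by
  have hx : (0:ℝ) ≤ (x:ℝ) := Nat.cast_nonneg x
  have hu : (0:ℝ) ≤ β * (x:ℝ) := by positivity
  unfold gwStep
  rw [add_zero, Real.div_rpow (by positivity) (by positivity),
    Real.mul_rpow (Real.exp_nonneg _) (by positivity), ← Real.exp_mul,
    ← Real.rpow_natCast (β * (x:ℝ)) y, ← Real.rpow_mul hu, mul_comm (y:ℝ) t,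
    Real.rpow_mul hu, Real.mul_rpow hβ.le hx, Real.rpow_natCast]

lemma mix_step {βA βH lam : ℝ} (hβA : 0 < βA) (hβH : 0 < βH)
    (hl0 : 0 < lam) (hl1 : lam < 1) (x y : ℕ) :
    gwStep βA 0 x y ^ lam * gwStep βH 0 x y ^ (1 - lam)
      = Real.exp (-((lam * βA + (1 - lam) * βH) * (x : ℝ)))
        * ((βA ^ lam * βH ^ (1 - lam)) * (x : ℝ)) ^ y / (Nat.factorial y : ℝ) := by
  have hx : (0:ℝ) ≤ (x:ℝ) := Nat.cast_nonneg x
  rw [rpow_gwStep hβA, rpow_gwStep hβH, div_mul_div_comm]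
  have hden : ((Nat.factorial y : ℝ)) ^ lam * ((Nat.factorial y : ℝ)) ^ (1 - lam)
      = (Nat.factorial y : ℝ) := by
    rw [← Real.rpow_add (by positivity)]; norm_num
  have hexp : Real.exp (-(βA * (x:ℝ)) * lam) * Real.exp (-(βH * (x:ℝ)) * (1 - lam))
      = Real.exp (-((lam * βA + (1 - lam) * βH) * (x:ℝ))) := by
    rw [← Real.exp_add]; ring_nf
  have hxpow : (x:ℝ) ^ lam * (x:ℝ) ^ (1 - lam) = (x:ℝ) := by
    rw [← Real.rpow_add' hx (by norm_num)]; norm_num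
  have hbase : βA ^ lam * (x:ℝ) ^ lam * (βH ^ (1 - lam) * (x:ℝ) ^ (1 - lam))
      = βA ^ lam * βH ^ (1 - lam) * (x:ℝ) := by
    rw [mul_mul_mul_comm, hxpow]
  rw [hden, mul_mul_mul_comm, hexp, ← mul_pow, hbase]

lemma tsum_aux (E R c : ℝ) :
    HasSum (fun y : ℕ => E * R ^ y / (Nat.factorial y : ℝ) * Real.exp (c * (y : ℝ)))
      (E * Real.exp (R * Real.exp c)) := by
  have h2 : HasSum (fun y : ℕ => (R * Real.exp c) ^ y / (Nat.factorial y : ℝ))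
      (Real.exp (R * Real.exp c)) := by
    have hs := Real.summable_pow_div_factorial (R * Real.exp c)
    have ht : Real.exp (R * Real.exp c)
        = ∑' y : ℕ, (R * Real.exp c) ^ y / (Nat.factorial y : ℝ) := by
      rw [Real.exp_eq_exp_ℝ, NormedSpace.exp_eq_tsum_div]
    exact ht ▸ hs.hasSum
  have h3 := h2.mul_left E
  convert h3 using 2 with y
  · rfl
  rw [mul_pow, ← Real.exp_nat_mul, mul_comm (y:ℝ) c]
  ring

lemma hellinger_main {βA βH lam : ℝ} (hβA : 0 < βA) (hβH : 0 < βH)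
    (hl0 : 0 < lam) (hl1 : lam < 1) :
    ∀ n : ℕ, ∀ w : ℕ,
      Summable (fun ω : Fin n → ℕ =>
        gwPath βA 0 w n ω ^ lam * gwPath βH 0 w n ω ^ (1 - lam)) ∧
      hellinger βA 0 βH 0 lam w n
        = Real.exp (aSeq (βA ^ lam * βH ^ (1 - lam)) (lam * βA + (1 - lam) * βH) n * (w : ℝ)) := by
  intro n
  induction n with
  | zero =>
    intro w
    have h1 : ∀ ω : Fin 0 → ℕ,
        gwPath βA 0 w 0 ω ^ lam * gwPath βH 0 w 0 ω ^ (1 - lam) = 1 := by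
      intro ω; simp [gwPath]
    have hs : HasSum (fun ω : Fin 0 → ℕ =>
        gwPath βA 0 w 0 ω ^ lam * gwPath βH 0 w 0 ω ^ (1 - lam)) 1 := by
      have := hasSum_single (f := fun ω : Fin 0 → ℕ =>
        gwPath βA 0 w 0 ω ^ lam * gwPath βH 0 w 0 ω ^ (1 - lam)) default
        (fun b hb => absurd (Subsingleton.elim b default) hb)
      beta_reduce at this
      rwa [h1] at this
    exact ⟨hs.summable, by rw [hellinger, hs.tsum_eq, aSeq]; simp⟩
  | succ n IH =>
    intro w
    set qE := βA ^ lam * βH ^ (1 - lam) with hqE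
    set βl := lam * βA + (1 - lam) * βH with hβl
    set F := fun (m : ℕ) (v : ℕ) (ω : Fin m → ℕ) =>
      gwPath βA 0 v m ω ^ lam * gwPath βH 0 v m ω ^ (1 - lam) with hF
    set S := fun y : ℕ => gwStep βA 0 w y ^ lam * gwStep βH 0 w y ^ (1 - lam) with hS
    have hGsplit : ∀ (y : ℕ) (ω : Fin n → ℕ),
        F (n+1) w (Fin.cons y ω) = S y * F n y ω := by
      intro y ω
      simp only [hF, hS, gwPath_cons]
      rw [Real.mul_rpow (gwStep_nonneg hβA.le _ _) (gwPath_nonneg hβA.le _ _ _),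
        Real.mul_rpow (gwStep_nonneg hβH.le _ _) (gwPath_nonneg hβH.le _ _ _)]
      ring
    have hFnonneg : ∀ (m v : ℕ) (ω : Fin m → ℕ), 0 ≤ F m v ω := by
      intro m v ω
      exact mul_nonneg (Real.rpow_nonneg (gwPath_nonneg hβA.le _ _ _) _)
        (Real.rpow_nonneg (gwPath_nonneg hβH.le _ _ _) _)
    have hSnonneg : ∀ y, 0 ≤ S y := fun y =>
      mul_nonneg (Real.rpow_nonneg (gwStep_nonneg hβA.le _ _) _)
        (Real.rpow_nonneg (gwStep_nonneg hβH.le _ _) _)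
    -- fiberwise sums
    have hfiber : ∀ y : ℕ, HasSum (fun ω : Fin n → ℕ => S y * F n y ω)
        (S y * Real.exp (aSeq qE βl n * (y : ℝ))) := by
      intro y
      have h := (IH y).1.hasSum
      have := (IH y).2
      rw [hellinger] at this
      rw [this] at h
      exact h.mul_left (S y)
    -- outer sum
    have houter : HasSum (fun y : ℕ => S y * Real.exp (aSeq qE βl n * (y : ℝ)))
        (Real.exp (aSeq qE βl (n+1) * (w : ℝ))) := by
      have h1 : ∀ y : ℕ, S y * Real.exp (aSeq qE βl n * (y : ℝ))
          = Real.exp (-(βl * (w : ℝ))) * (qE * (w:ℝ)) ^ y / (Nat.factorial y : ℝ)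
            * Real.exp (aSeq qE βl n * (y : ℝ)) := by
        intro y
        simp only [hS]
        rw [mix_step hβA hβH hl0 hl1]
      have h2 := tsum_aux (Real.exp (-(βl * (w : ℝ)))) (qE * (w:ℝ)) (aSeq qE βl n)
      have h3 : Real.exp (-(βl * (w : ℝ))) * Real.exp (qE * (w:ℝ) * Real.exp (aSeq qE βl n))
          = Real.exp (aSeq qE βl (n+1) * (w : ℝ)) := by
        rw [← Real.exp_add, aSeq]; ring_nf
      rw [h3] at h2
      exact (funext h1 : _) ▸ h2
    -- product summability
    have hGnonneg : (0 : ℕ × (Fin n → ℕ) → ℝ) ≤ fun p => F (n+1) w (Fin.cons p.1 p.2) := by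
      intro p; exact hFnonneg _ _ _
    have hGsum : Summable (fun p : ℕ × (Fin n → ℕ) => F (n+1) w (Fin.cons p.1 p.2)) := by
      rw [summable_prod_of_nonneg hGnonneg]
      constructor
      · intro y
        refine Summable.congr ((hfiber y).summable) ?_
        intro ω; rw [← hGsplit]
      · refine Summable.congr houter.summable ?_
        intro y
        have : ∀ ω, F (n+1) w (Fin.cons y ω) = S y * F n y ω := hGsplit y
        rw [tsum_congr this, (hfiber y).tsum_eq]
    -- transfer along the equivalence
    have e := Fin.consEquiv (fun _ : Fin (n+1) => ℕ)
    have hcomp : (fun p : ℕ × (Fin n → ℕ) => F (n+1) w (Fin.cons p.1 p.2))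
        = (F (n+1) w) ∘ (Fin.consEquiv (fun _ : Fin (n+1) => ℕ)) := rfl
    have hsum : Summable (F (n+1) w) := by
      rw [← (Fin.consEquiv (fun _ : Fin (n+1) => ℕ)).summable_iff (f := F (n+1) w), ← hcomp]
      exact hGsum
    refine ⟨hsum, ?_⟩
    have htsum : hellinger βA 0 βH 0 lam w (n+1) = ∑' p : ℕ × (Fin n → ℕ),
        F (n+1) w (Fin.cons p.1 p.2) := by
      rw [hellinger]
      exact ((Fin.consEquiv (fun _ : Fin (n+1) => ℕ)).tsum_eq (F (n+1) w)).symm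
    rw [htsum, Summable.tsum_prod' hGsum (fun y => ((hfiber y).summable.congr
      (fun ω => (hGsplit y ω).symm)))]
    have : ∀ y : ℕ, ∑' ω : Fin n → ℕ, F (n+1) w (Fin.cons y ω)
        = S y * Real.exp (aSeq qE βl n * (y : ℝ)) := by
      intro y
      rw [tsum_congr (hGsplit y), (hfiber y).tsum_eq]
    rw [tsum_congr this, houter.tsum_eq]

lemma aSeq_strict_anti {q βl : ℝ} (hq : 0 < q) (hqβ : q < βl) :
    ∀ n : ℕ, aSeq q βl (n+1) < aSeq q βl n := by
  intro n
  induction n with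
  | zero => simp [aSeq]; linarith
  | succ m ih =>
    show q * Real.exp (aSeq q βl (m+1)) - βl < q * Real.exp (aSeq q βl m) - βl
    have := Real.exp_lt_exp.2 ih
    nlinarith [Real.exp_pos (aSeq q βl (m+1))]

lemma aSeq_gt_fix {q βl x₀ : ℝ} (hq : 0 < q) (hx₀neg : x₀ < 0)
    (hfix : q * Real.exp x₀ - βl = x₀) :
    ∀ n : ℕ, x₀ < aSeq q βl n := by
  intro n
  induction n with
  | zero => exact hx₀neg
  | succ m ih =>
    show x₀ < q * Real.exp (aSeq q βl m) - βl
    have := Real.exp_lt_exp.2 ih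
    nlinarith

lemma aSeq_tendsto {q βl x₀ : ℝ} (hq : 0 < q) (hqβ : q < βl) (hx₀neg : x₀ < 0)
    (hfix : q * Real.exp x₀ - βl = x₀) :
    Tendsto (fun n => aSeq q βl n) atTop (nhds x₀) := by
  have hanti : Antitone (fun n => aSeq q βl n) :=
    antitone_nat_of_succ_le fun n => (aSeq_strict_anti hq hqβ n).le
  have hbdd : BddBelow (Set.range fun n => aSeq q βl n) :=
    ⟨x₀, fun z ⟨n, hn⟩ => hn ▸ (aSeq_gt_fix hq hx₀neg hfix n).le⟩
  have hL := tendsto_atTop_ciInf hanti hbdd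
  set L := ⨅ n, aSeq q βl n with hLdef
  -- L is a fixed point
  have hLfix : q * Real.exp L - βl = L := by
    have h1 : Tendsto (fun n => aSeq q βl (n+1)) atTop (nhds L) :=
      hL.comp (tendsto_add_atTop_nat 1)
    have h2 : Tendsto (fun n => q * Real.exp (aSeq q βl n) - βl) atTop
        (nhds (q * Real.exp L - βl)) :=
      ((Real.continuous_exp.tendsto L).comp hL).const_mul q |>.sub_const βl
    exact tendsto_nhds_unique h2 h1
  have hx₀L : x₀ ≤ L := le_ciInf fun n => (aSeq_gt_fix hq hx₀neg hfix n).le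
  have hLneg : L < 0 := by
    have h1 : L ≤ aSeq q βl 1 := ciInf_le hbdd 1
    have : aSeq q βl 1 = q - βl := by simp [aSeq]
    linarith
  -- uniqueness of the negative fixed point, by strict convexity of exp
  have hLeq : L = x₀ := by
    by_contra hne
    have hlt : x₀ < L := lt_of_le_of_ne hx₀L (Ne.symm hne)
    have hx0ne : x₀ ≠ 0 := ne_of_lt hx₀neg
    set t := L / x₀ with ht
    have ht0 : 0 < t := div_pos_iff.2 (Or.inr ⟨hLneg, hx₀neg⟩)
    have htx : t * x₀ = L := by rw [ht]; exact div_mul_cancel₀ L hx0ne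
    have ht1 : t < 1 := by nlinarith
    have hconv := strictConvexOn_exp.2 (Set.mem_univ x₀) (Set.mem_univ (0:ℝ))
      hx0ne ht0 (by linarith : (0:ℝ) < 1 - t) (by ring)
    simp only [smul_eq_mul, mul_zero, add_zero, Real.exp_zero, mul_one] at hconv
    rw [htx] at hconv
    -- hconv : exp L < t * exp x₀ + (1 - t)
    have h1 : q * Real.exp L < t * (q * Real.exp x₀) + (1 - t) * q := by nlinarith
    have h2 : q * Real.exp x₀ = x₀ + βl := by linarith
    have h3 : q * Real.exp L = L + βl := by linarith
    rw [h2, h3] at h1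
    nlinarith
  rwa [hLeq] at hL

lemma geom_lt_arith_NI {βA βH lam : ℝ} (hβA : 0 < βA) (hβH : 0 < βH) (hne : βA ≠ βH)
    (hl0 : 0 < lam) (hl1 : lam < 1) :
    βA ^ lam * βH ^ (1 - lam) < lam * βA + (1 - lam) * βH := by
  have hconc := strictConcaveOn_log_Ioi.2 (Set.mem_Ioi.2 hβA) (Set.mem_Ioi.2 hβH) hne hl0
    (by linarith : (0:ℝ) < 1 - lam) (by ring)
  have hq : βA ^ lam * βH ^ (1 - lam)
      = Real.exp (lam * Real.log βA + (1 - lam) * Real.log βH) := by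
    rw [Real.rpow_def_of_pos hβA, Real.rpow_def_of_pos hβH, ← Real.exp_add]; ring_nf
  have hβlpos : 0 < lam * βA + (1 - lam) * βH :=
    add_pos (mul_pos hl0 hβA) (mul_pos (by linarith) hβH)
  rw [hq]
  calc Real.exp (lam * Real.log βA + (1 - lam) * Real.log βH)
      < Real.exp (Real.log (lam * βA + (1 - lam) * βH)) :=
        Real.exp_lt_exp.2 (by simpa [smul_eq_mul] using hconc)
    _ = lam * βA + (1 - lam) * βH := Real.exp_log hβlpos

/-- Detailed behaviour of the Hellinger integrals in the no-immigration case
`P_NI` (`α_A = α_H = 0`, `β_A ≠ β_H`):  exact value, strict decrease, limit, and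
vanishing exponential rate. Here `x₀` is the unique negative fixed point of
`x ↦ q_λ^E·e^x − β_λ`. -/
theorem hellinger_NI_detailed (βA βH lam : ℝ)
    (hβA : 0 < βA) (hβH : 0 < βH) (hβne : βA ≠ βH)
    (hlam : lam ∈ Set.Ioo (0 : ℝ) 1) (ω₀ : ℕ) (hω₀ : 1 ≤ ω₀)
    (qE βl : ℝ) (hqE : qE = βA ^ lam * βH ^ (1 - lam)) (hβl : βl = lam * βA + (1 - lam) * βH)
    (x₀ : ℝ) (hx₀neg : x₀ < 0) (hx₀fix : qE * Real.exp x₀ - βl = x₀) :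
    (0 < qE ∧ qE < βl) ∧
    (hellinger βA 0 βH 0 lam ω₀ 1
        = Real.exp ((βA ^ lam * βH ^ (1 - lam) - lam * βA - (1 - lam) * βH) * (ω₀ : ℝ)) ∧
      hellinger βA 0 βH 0 lam ω₀ 1 < 1) ∧
    (∀ n : ℕ, 1 ≤ n → hellinger βA 0 βH 0 lam ω₀ n = Real.exp (aSeq qE βl n * (ω₀ : ℝ))) ∧
    (∀ n : ℕ, 1 ≤ n → hellinger βA 0 βH 0 lam ω₀ (n + 1) < hellinger βA 0 βH 0 lam ω₀ n) ∧
    (Tendsto (fun n : ℕ => hellinger βA 0 βH 0 lam ω₀ n) atTop (nhds (Real.exp (x₀ * (ω₀ : ℝ)))) ∧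
      Real.exp (x₀ * (ω₀ : ℝ)) ∈ Set.Ioo (0 : ℝ) 1) ∧
    Tendsto (fun n : ℕ => (1 / (n : ℝ)) * Real.log (hellinger βA 0 βH 0 lam ω₀ n)) atTop
      (nhds 0) := by
  obtain ⟨hl0, hl1⟩ := hlam
  have hqpos : 0 < qE := by rw [hqE]; positivity
  have hqlt : qE < βl := by rw [hqE, hβl]; exact geom_lt_arith_NI hβA hβH hβne hl0 hl1
  have hw : (0:ℝ) < (ω₀ : ℝ) := by exact_mod_cast Nat.lt_of_lt_of_le Nat.zero_lt_one hω₀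
  have hmain := hellinger_main hβA hβH hl0 hl1
  have hH : ∀ n, hellinger βA 0 βH 0 lam ω₀ n = Real.exp (aSeq qE βl n * (ω₀ : ℝ)) := by
    intro n
    rw [(hmain n ω₀).2, ← hqE, ← hβl]
  have ha1 : aSeq qE βl 1 = qE - βl := by simp [aSeq]
  have hA := aSeq_tendsto hqpos hqlt hx₀neg hx₀fix
  have h1 : Tendsto (fun n : ℕ => Real.exp (aSeq qE βl n * (ω₀ : ℝ))) atTop
      (nhds (Real.exp (x₀ * (ω₀ : ℝ)))) :=
    (Real.continuous_exp.tendsto _).comp (hA.mul_const _)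
  refine ⟨⟨hqpos, hqlt⟩, ⟨?_, ?_⟩, fun n _ => hH n, ?_, ⟨?_, ?_, ?_⟩, ?_⟩
  · rw [hH 1, ha1, hqE, hβl]
    congr 1
    ring
  · rw [hH 1, ha1]
    exact Real.exp_lt_one_iff.2 (mul_neg_of_neg_of_pos (by linarith) hw)
  · intro n _
    rw [hH (n+1), hH n]
    exact Real.exp_lt_exp.2 (mul_lt_mul_of_pos_right (aSeq_strict_anti hqpos hqlt n) hw)
  · exact h1.congr fun n => (hH n).symm
  · exact Real.exp_pos _
  · exact Real.exp_lt_one_iff.2 (mul_neg_of_neg_of_pos hx₀neg hw)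
  · have h2 : ∀ n : ℕ, (1 / (n:ℝ)) * Real.log (hellinger βA 0 βH 0 lam ω₀ n)
        = (1 / (n:ℝ)) * (aSeq qE βl n * (ω₀ : ℝ)) := by
      intro n; rw [hH n, Real.log_exp]
    have h3 : Tendsto (fun n : ℕ => (1 / (n:ℝ)) * (aSeq qE βl n * (ω₀ : ℝ))) atTop
        (nhds (0 * (x₀ * (ω₀ : ℝ)))) :=
      tendsto_one_div_atTop_nhds_zero_nat.mul (hA.mul_const _)
    rw [zero_mul] at h3
    exact h3.congr fun n => (h2 n).symm
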